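/- Let p be a prime and q a power of p. An element η ∈ F_{q^{p^n}} is a normal basis generator of F_{q^{p^n}} over F_q if and only if Tr_{F_{q^{p^n}}/F_q}(η) ≠ 0. -/

import Mathlib

open Polynomial

private lemma aux_aeval_mem_span {E F : Type*} [Field E] [AddCommGroup F] [Module E F]
    (u : Module.End E F) (x : F) (f : Polynomial E) :
    (Polynomial.aeval u f) x ∈ Submodule.span E (Set.range fun i : ℕ => (u ^ i) x) := by
  rw [Polynomial.aeval_eq_sum_range, LinearMap.sum_apply]
  refine Submodule.sum_mem _ fun i _ => ?_
  rw [LinearMap.smul_apply]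
  exact Submodule.smul_mem _ _ (Submodule.subset_span ⟨i, rfl⟩)

private lemma aux_gen (p : ℕ) [Fact p.Prime] (E F : Type*) [Field E] [Field F]
    [Fintype E] [Fintype F] [Algebra E F] [IsGalois E F] [CharP E p] :
    ∃ σ : F ≃ₐ[E] F, orderOf σ = Module.finrank E F ∧
      ∀ g : F ≃ₐ[E] F, ∃ i : ℕ, g = σ ^ i := by
  classical
  haveI : FiniteDimensional E F := Module.Finite.of_finite
  haveI : CharP F p := charP_of_injective_algebraMap (algebraMap E F).injective p
  haveI : ExpChar F p := ExpChar.prime Fact.out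
  obtain ⟨k, -, hk⟩ := FiniteField.card E p
  set q : ℕ := Fintype.card E with hq
  have hq1 : 1 < q := Fintype.one_lt_card
  -- the Frobenius E-algebra endomorphism
  let f0 : F →ₐ[E] F :=
    { iterateFrobenius F p k with
      commutes' := fun e => by
        show iterateFrobenius F p k (algebraMap E F e) = algebraMap E F e
        rw [iterateFrobenius_def, ← map_pow, ← hk, FiniteField.pow_card] }
  have hf0 : ∀ x : F, f0 x = x ^ q := fun x => by
    show iterateFrobenius F p k x = x ^ q
    rw [iterateFrobenius_def, ← hk]
  let σ : F ≃ₐ[E] F := AlgEquiv.ofBijective f0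
    ((Finite.injective_iff_bijective).mp (f0 : F →+* F).injective)
  have hσ : ∀ x : F, σ x = x ^ q := fun x => hf0 x
  have hσpow : ∀ (i : ℕ) (x : F), (σ ^ i) x = x ^ q ^ i := by
    intro i
    induction i with
    | zero => intro x; simp
    | succ i ih =>
      intro x
      rw [pow_succ, AlgEquiv.mul_apply, hσ, ih, ← pow_mul, ← pow_succ']
  set d : ℕ := Module.finrank E F with hd
  have hcardF : Fintype.card F = q ^ d := Module.card_eq_pow_finrank
  have hcardG : Fintype.card (F ≃ₐ[E] F) = d := by
    rw [← Nat.card_eq_fintype_card]; exact IsGalois.card_aut_eq_finrank E F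
  have hord : orderOf σ = d := by
    have h1 : orderOf σ ∣ d := hcardG ▸ orderOf_dvd_card
    have h2 : d ≤ orderOf σ := by
      by_contra hlt
      push_neg at hlt
      set m := orderOf σ with hm
      have hm0 : 0 < m := orderOf_pos σ
      have h3 : σ ^ m = 1 := pow_orderOf_eq_one σ
      have h4 : ∀ x : F, x ^ q ^ m = x := by
        intro x
        have := congrArg (fun g : F ≃ₐ[E] F => g x) h3
        simpa [hσpow] using this
      have hqm1 : 1 < q ^ m := Nat.one_lt_pow hm0.ne' hq1
      set f : F[X] := X ^ q ^ m - X with hf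
      have hfne : f ≠ 0 := FiniteField.X_pow_card_sub_X_ne_zero F hqm1
      have hdeg : f.natDegree = q ^ m := FiniteField.X_pow_card_sub_X_natDegree_eq F hqm1
      have hsub : (Finset.univ : Finset F) ⊆ f.roots.toFinset := by
        intro x _
        rw [Multiset.mem_toFinset, mem_roots hfne]
        simp [hf, IsRoot, h4 x, sub_self]
      have : Fintype.card F ≤ q ^ m := by
        calc Fintype.card F = (Finset.univ : Finset F).card := rfl
          _ ≤ f.roots.toFinset.card := Finset.card_le_card hsub
          _ ≤ Multiset.card f.roots := Multiset.toFinset_card_le _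
          _ ≤ f.natDegree := f.card_roots'
          _ = q ^ m := hdeg
      have : q ^ d ≤ q ^ m := hcardF ▸ this
      exact absurd this (by
        have := Nat.pow_lt_pow_right hq1 hlt
        omega)
    exact le_antisymm (Nat.le_of_dvd (by
      have : 0 < d := Module.finrank_pos
      omega) h1) h2
  refine ⟨σ, hord, fun g => ?_⟩
  have htop : Subgroup.zpowers σ = ⊤ := by
    apply Subgroup.eq_top_of_card_eq
    rw [Nat.card_zpowers, hord, Nat.card_eq_fintype_card, hcardG]
  have : g ∈ Submonoid.powers σ := by
    rw [mem_powers_iff_mem_zpowers, htop]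
    trivial
  obtain ⟨i, hi⟩ := this
  exact ⟨i, hi.symm⟩

/-- For the extension `F_{q^{p^n}}/F_q` of finite fields of characteristic `p`
and degree `p^n`, an element `η` is a normal basis generator (its Galois conjugates form a
basis) if and only if `Tr(η) ≠ 0`. -/
theorem stmt_8 (p n : ℕ) [Fact p.Prime]
    (E F : Type*) [Field E] [Field F] [Fintype E] [Fintype F]
    [Algebra E F] [IsGalois E F] [CharP E p]
    (hdeg : Module.finrank E F = p ^ n) (η : F) :
    (LinearIndependent E (fun g : F ≃ₐ[E] F => g η) ∧
      Submodule.span E (Set.range fun g : F ≃ₐ[E] F => g η) = ⊤) ↔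
    Algebra.trace E F η ≠ 0 := by
  classical
  haveI : FiniteDimensional E F := Module.Finite.of_finite
  obtain ⟨σ, hord, hgen⟩ := aux_gen p E F
  obtain ⟨N, hNdef⟩ : ∃ m, p ^ n = m := ⟨_, rfl⟩
  rw [hNdef] at hdeg
  have hN1 : 1 ≤ N := hNdef ▸ Nat.one_le_pow _ _ (Fact.out : p.Prime).pos
  have hordN : orderOf σ = N := by rw [hord, hdeg]
  have hcardG : Fintype.card (F ≃ₐ[E] F) = N := by
    rw [← Nat.card_eq_fintype_card, IsGalois.card_aut_eq_finrank, hdeg]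
  -- the endomorphism s and T = s - 1
  set s : Module.End E F := σ.toLinearMap with hs
  have hsi : ∀ (i : ℕ) (x : F), (s ^ i) x = (σ ^ i) x := by
    intro i
    induction i with
    | zero => intro x; simp
    | succ i ih =>
      intro x
      rw [pow_succ, pow_succ, Module.End.mul_apply, AlgEquiv.mul_apply]
      rw [show s x = σ x from rfl, ih]
  haveI : CharP (Module.End E F) p :=
    charP_of_injective_algebraMap (algebraMap E (Module.End E F)).injective p
  have hsN : s ^ N = 1 := by
    ext x
    rw [hsi]
    have h1 : σ ^ N = 1 := by rw [← hcardG]; exact pow_card_eq_one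
    rw [h1]
    rfl
  set T : Module.End E F := s - 1 with hT
  have hTN : T ^ N = 0 := by
    rw [hT, ← hNdef, sub_pow_char_pow_of_commute _ _ (Commute.one_right s), hNdef, hsN,
      one_pow, sub_self]
  have hTm : ∀ m : ℕ, N ≤ m → T ^ m = 0 := fun m hm => by
    rw [show m = (m - N) + N by omega, pow_add, hTN, mul_zero]
  -- polynomial identity (X-1)^(N-1) = ∑ X^i
  have hpoly : ((X : E[X]) - 1) ^ (N - 1) = ∑ i ∈ Finset.range N, (X : E[X]) ^ i := by
    have hXne : (X : E[X]) - 1 ≠ 0 := by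
      have := X_sub_C_ne_zero (1 : E)
      simpa using this
    apply mul_left_cancel₀ hXne
    have h1 : ((X : E[X]) - 1) * ((X - 1) ^ (N - 1)) = (X - 1) ^ N := by
      rw [← pow_succ']
      congr 1
      omega
    rw [h1, mul_comm, geom_sum_mul, ← hNdef, sub_pow_char_pow, one_pow]
  have key : T ^ (N - 1) = ∑ i ∈ Finset.range N, s ^ i := by
    have h2 := congrArg (Polynomial.aeval s) hpoly
    simpa [map_pow, map_sub, map_sum] using h2
  -- trace formula
  have htrace : algebraMap E F (Algebra.trace E F η) = (T ^ (N - 1)) η := by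
    rw [trace_eq_sum_automorphisms, key, LinearMap.sum_apply]
    refine (Finset.sum_bij (fun (i : ℕ) (_ : i ∈ Finset.range N) => σ ^ i) ?_ ?_ ?_ ?_).symm
    · intros; exact Finset.mem_univ _
    · intro a ha b hb hab
      refine pow_injOn_Iio_orderOf ?_ ?_ hab <;>
        simpa [hordN] using (by assumption : _ ∈ Finset.range N)
    · intro g _
      obtain ⟨j, rfl⟩ := hgen g
      exact ⟨j % N, Finset.mem_range.mpr (Nat.mod_lt _ (by omega)),
        by simpa [hordN] using pow_mod_orderOf σ j⟩
    · intro i _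
      exact (hsi i η)
  have htr_iff : Algebra.trace E F η ≠ 0 ↔ (T ^ (N - 1)) η ≠ 0 := by
    rw [← htrace]
    exact (map_ne_zero_iff _ (algebraMap E F).injective).symm
  -- span equality
  have hspan_eq : Submodule.span E (Set.range fun g : F ≃ₐ[E] F => g η) =
      Submodule.span E (Set.range fun i : ℕ => (T ^ i) η) := by
    apply le_antisymm
    · rw [Submodule.span_le]
      rintro _ ⟨g, rfl⟩
      obtain ⟨i, rfl⟩ := hgen g
      have haevT : Polynomial.aeval T ((X : E[X]) + 1) = s := by
        rw [map_add, aeval_X, map_one, hT, sub_add_cancel]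
      have h3 : (σ ^ i) η = (Polynomial.aeval T (((X : E[X]) + 1) ^ i)) η := by
        rw [map_pow, haevT, hsi]
      rw [show (fun g : F ≃ₐ[E] F => g η) (σ ^ i) = (σ ^ i) η from rfl, h3]
      exact aux_aeval_mem_span T η _
    · rw [Submodule.span_le]
      rintro _ ⟨i, rfl⟩
      show (T ^ i) η ∈ _
      have h4 : (T ^ i) η = (Polynomial.aeval s (((X : E[X]) - 1) ^ i)) η := by
        rw [map_pow, map_sub, aeval_X, map_one, ← hT]
      rw [h4]
      refine Submodule.span_mono ?_ (aux_aeval_mem_span s η _)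
      rintro _ ⟨j, rfl⟩
      exact ⟨σ ^ j, (hsi j η).symm⟩
  constructor
  · rintro ⟨-, hspan⟩
    rw [htr_iff]
    intro h0
    have hzero : ∀ i : ℕ, N - 1 ≤ i → (T ^ i) η = 0 := by
      intro i hi
      rw [show i = (i - (N - 1)) + (N - 1) by omega, pow_add, Module.End.mul_apply, h0,
        map_zero]
    have hle : Submodule.span E (Set.range fun i : ℕ => (T ^ i) η) ≤
        Submodule.span E (Set.range fun i : Fin (N - 1) => (T ^ (i : ℕ)) η) := by
      rw [Submodule.span_le]
      rintro _ ⟨i, rfl⟩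
      show (T ^ i) η ∈ _
      by_cases h : i < N - 1
      · exact Submodule.subset_span ⟨⟨i, h⟩, rfl⟩
      · rw [hzero i (le_of_not_gt h)]
        exact Submodule.zero_mem _
    have htop : Submodule.span E (Set.range fun i : Fin (N - 1) => (T ^ (i : ℕ)) η) = ⊤ :=
      top_le_iff.mp (hspan ▸ hspan_eq ▸ hle)
    have hfr : Module.finrank E F ≤ N - 1 := by
      have h5 := finrank_span_le_card (R := E)
        (Set.range fun i : Fin (N - 1) => (T ^ (i : ℕ)) η)
      rw [htop, finrank_top] at h5
      calc Module.finrank E F ≤ _ := h5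
        _ ≤ N - 1 := by
          rw [Set.toFinset_range]
          exact (Finset.card_image_le).trans (by simp)
    rw [hdeg] at hfr
    omega
  · intro htr
    have hτ : (T ^ (N - 1)) η ≠ 0 := htr_iff.mp htr
    set f : Fin N → F := fun i => (T ^ (i : ℕ)) η with hfdef
    have hind : LinearIndependent E f := by
      rw [Fintype.linearIndependent_iff]
      intro c hc
      suffices h : ∀ k : ℕ, ∀ hk : k < N, c ⟨k, hk⟩ = 0 by
        intro i; have := h i.1 i.2; simpa using this
      intro k
      induction k using Nat.strong_induction_on with
      | _ k ih =>
        intro hk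
        have h6 := congrArg (T ^ (N - 1 - k)) hc
        rw [map_zero, map_sum] at h6
        have h7 : ∀ i : Fin N, (T ^ (N - 1 - k)) (c i • f i) =
            c i • (T ^ (N - 1 - k + (i : ℕ))) η := by
          intro i
          rw [map_smul, hfdef, ← Module.End.mul_apply, ← pow_add]
        rw [Finset.sum_congr rfl (fun i _ => h7 i)] at h6
        have h8 : ∑ i : Fin N, c i • (T ^ (N - 1 - k + (i : ℕ))) η =
            c ⟨k, hk⟩ • (T ^ (N - 1)) η := by
          rw [Finset.sum_eq_single ⟨k, hk⟩]
          · show c ⟨k, hk⟩ • (T ^ (N - 1 - k + ((⟨k, hk⟩ : Fin N) : ℕ))) η = _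
            congr 3
            simp only [Fin.val_mk]
            omega
          · intro b _ hb
            rcases lt_or_gt_of_ne hb with hlt | hgt
            · have hb1 : (b : ℕ) < k := by
                have := Fin.lt_def.mp hlt
                simpa using this
              have hcb : c b = 0 := by
                have := ih b.1 hb1 b.2
                simpa using this
              rw [hcb, zero_smul]
            · have hb1 : k < (b : ℕ) := by
                have := Fin.lt_def.mp hgt
                simpa using this
              rw [hTm _ (by omega), LinearMap.zero_apply, smul_zero]
          · intro h; exact absurd (Finset.mem_univ _) h
        rw [h8] at h6
        exact (smul_eq_zero.mp h6).resolve_right hτ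
    have hfr2 : Module.finrank E (Submodule.span E (Set.range f)) = N :=
      (finrank_span_eq_card hind).trans (by simp)
    have hftop : Submodule.span E (Set.range f) = ⊤ :=
      Submodule.eq_top_of_finrank_eq (hfr2.trans hdeg.symm)
    have hTtop : Submodule.span E (Set.range fun i : ℕ => (T ^ i) η) = ⊤ := by
      rw [eq_top_iff, ← hftop]
      exact Submodule.span_mono (by rintro _ ⟨i, rfl⟩; exact ⟨(i : ℕ), rfl⟩)
    have hGtop : Submodule.span E (Set.range fun g : F ≃ₐ[E] F => g η) = ⊤ := by
      rw [hspan_eq, hTtop]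
    exact ⟨linearIndependent_of_top_le_span_of_card_eq_finrank hGtop.ge
      (hcardG.trans hdeg.symm), hGtop⟩
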